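/- Total growth bound for the multiplier w: for every β ∈ (0,1/2] there exists a constant C ≥ 1, independent of ν, η and t, such that for all ν ∈ (0,1], all real η ≥ 3 and all t ≥ 0, one has 1 ≤ w(t,η) ≤ C. -/

import Mathlib

open Finset Real


/-- Japanese bracket `⟨x⟩ = (1+x²)^{1/2}`. -/
noncomputable def jap (x : ℝ) : ℝ := Real.sqrt (1 + x ^ 2)

/-- Critical time `t_{m,η} = 2η/(2m+1)` (with the convention `t_{0,η} = 2η`). -/
noncomputable def tcrit (m : ℕ) (η : ℝ) : ℝ := 2 * η / (2 * (m : ℝ) + 1)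

/-- `D⁻_{m,η} = η/((2m+1)m)`. -/
noncomputable def Dminus (m : ℕ) (η : ℝ) : ℝ := η / ((2 * (m : ℝ) + 1) * (m : ℝ))

/-- The toy-model growth factor
`g_m(τ,η) = exp(⟨ν^{1/3}t_{m,η}⟩^{−(1+β)} (ν^{1/3}η/m²)(arctan τ + arctan D⁻_{m,η}))`. -/
noncomputable def gm (ν β : ℝ) (m : ℕ) (η τ : ℝ) : ℝ :=
  Real.exp ((jap (ν ^ ((1:ℝ)/3) * tcrit m η)) ^ (-(1 + β)) *
    (ν ^ ((1:ℝ)/3) * η / (m : ℝ) ^ 2) * (Real.arctan τ + Real.arctan (Dminus m η)))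

/-- `E(√η)`: the largest positive integer `E` with `(2E+1)E ≤ η`. -/
noncomputable def Esq (η : ℝ) : ℕ := sSup {E : ℕ | 1 ≤ E ∧ ((2 * (E : ℝ) + 1) * (E : ℝ)) ≤ η}


section Helpers

lemma sum_rpow_le {β : ℝ} (hβ0 : 0 < β) (hβ1 : β ≤ 1) (M : ℕ) :
    ∑ j ∈ Finset.Icc 1 M, (j:ℝ) ^ (β - 1) ≤ (M:ℝ) ^ β / β := by
  induction M with
  | zero => simp [Real.zero_rpow (ne_of_gt hβ0)]
  | succ M ih =>
    rw [Finset.sum_Icc_succ_top (by omega : 1 ≤ M + 1)]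
    have hM1 : (0:ℝ) < (M:ℝ) + 1 := by positivity
    have hb : ((M:ℝ)/((M:ℝ)+1)) ^ β ≤ 1 - β/((M:ℝ)+1) := by
      have hs : (-1:ℝ) ≤ -(1/((M:ℝ)+1)) := by
        rw [neg_le_neg_iff, div_le_one hM1]; linarith
      have := rpow_one_add_le_one_add_mul_self hs hβ0.le hβ1
      have he : (1 + -(1/((M:ℝ)+1))) = (M:ℝ)/((M:ℝ)+1) := by field_simp; ring
      rw [he] at this
      calc ((M:ℝ)/((M:ℝ)+1)) ^ β ≤ 1 + β * -(1/((M:ℝ)+1)) := this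
        _ = 1 - β/((M:ℝ)+1) := by ring
    have hkey : (M:ℝ) ^ β + β * ((M:ℝ)+1) ^ (β-1) ≤ ((M:ℝ)+1) ^ β := by
      have h1 : ((M:ℝ)/((M:ℝ)+1)) ^ β = (M:ℝ)^β / ((M:ℝ)+1)^β := by
        rw [Real.div_rpow (Nat.cast_nonneg M) hM1.le]
      have h2 : ((M:ℝ)+1) ^ (β-1) = ((M:ℝ)+1)^β / ((M:ℝ)+1) := by
        rw [Real.rpow_sub hM1, Real.rpow_one]
      rw [h1] at hb
      have hp : (0:ℝ) < ((M:ℝ)+1)^β := Real.rpow_pos_of_pos hM1 β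
      rw [div_le_iff₀ hp] at hb
      rw [h2]
      have hq : (1 - β/((M:ℝ)+1)) * ((M:ℝ)+1)^β
          = ((M:ℝ)+1)^β - β * (((M:ℝ)+1)^β/((M:ℝ)+1)) := by ring
      rw [hq] at hb
      linarith
    have h3 : ((M:ℝ)+1) ^ (β-1) ≤ (((M:ℝ)+1)^β - (M:ℝ)^β)/β := by
      rw [le_div_iff₀ hβ0]; nlinarith
    have h4 : (M:ℝ)^β/β + (((M:ℝ)+1)^β - (M:ℝ)^β)/β = ((M:ℝ)+1)^β/β := by
      field_simp; ring
    push_cast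
    linarith

lemma sum_inv_sq_le (K : ℕ) (hK : 1 ≤ K) (N : ℕ) :
    ∑ j ∈ Finset.Icc K N, (1:ℝ) / (j:ℝ)^2 ≤ 2 / (K:ℝ) := by
  have main : ∀ N : ℕ, ∑ j ∈ Finset.Icc K N, (1:ℝ)/(j:ℝ)^2 ≤
      ((K:ℝ) - 1/2)⁻¹ - (((max K (N+1) : ℕ):ℝ) - 1/2)⁻¹ := by
    intro N
    induction N with
    | zero =>
      rw [Finset.Icc_eq_empty (by omega)]
      have h1 : max K 1 = K := by omega
      simp [h1]
    | succ N ih =>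
      by_cases h : K ≤ N + 1
      · rw [Finset.sum_Icc_succ_top h]
        have hmax1 : max K (N+1+1) = N+2 := by omega
        have hmax2 : max K (N+1) = N+1 := by omega
        rw [hmax2] at ih; rw [hmax1]
        have key : (1:ℝ)/((N:ℝ)+1)^2 ≤ ((N:ℝ) + 1/2)⁻¹ - ((N:ℝ) + 3/2)⁻¹ := by
          have h1 : (0:ℝ) < (N:ℝ) + 1/2 := by positivity
          have h2 : (0:ℝ) < (N:ℝ) + 3/2 := by positivity
          rw [inv_sub_inv (ne_of_gt h1) (ne_of_gt h2)]
          rw [div_le_div_iff₀ (by positivity) (by positivity)]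
          nlinarith [sq_nonneg ((N:ℝ))]
        push_cast at ih key ⊢
        have heq1 : (N:ℝ) + 1 - 1/2 = (N:ℝ) + 1/2 := by ring
        have heq2 : (N:ℝ) + 2 - 1/2 = (N:ℝ) + 3/2 := by ring
        rw [heq1] at ih
        rw [heq2]
        linarith
      · rw [Finset.Icc_eq_empty (by omega)]
        have h1 : max K (N+1) = K := by omega
        have h2 : max K (N+1+1) = K := by omega
        rw [Finset.Icc_eq_empty (by omega), h1] at ih
        rw [h2]
        simpa using ih
  have hK1 : (1:ℝ) ≤ (K:ℝ) := by exact_mod_cast hK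
  have hK2 : (0:ℝ) < (K:ℝ) - 1/2 := by linarith
  have hmax : (0:ℝ) < (((max K (N+1):ℕ):ℝ)) - 1/2 := by
    have : (1:ℝ) ≤ ((max K (N+1):ℕ):ℝ) := by exact_mod_cast (by omega : 1 ≤ max K (N+1))
    linarith
  have h5 := main N
  have h6 : (0:ℝ) ≤ ((((max K (N+1):ℕ):ℝ)) - 1/2)⁻¹ := inv_nonneg.mpr hmax.le
  have h7 : ((K:ℝ) - 1/2)⁻¹ ≤ 2/(K:ℝ) := by
    rw [inv_eq_one_div, div_le_div_iff₀ hK2 (by linarith)]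
    linarith
  linarith

lemma phi_sum_le {β A : ℝ} (hβ0 : 0 < β) (hβ1 : β ≤ 1) (hA : 0 < A) (N : ℕ) :
    ∑ j ∈ Finset.Icc 1 N, min (A/(j:ℝ)^2) (3*(j:ℝ)^(β-1)*A^(-β)) ≤ 3/β + 2 := by
  set M := ⌊A⌋₊ with hM
  set φ : ℕ → ℝ := fun j => min (A/(j:ℝ)^2) (3*(j:ℝ)^(β-1)*A^(-β)) with hφ
  rw [← Finset.sum_filter_add_sum_filter_not (Finset.Icc 1 N) (fun j => j ≤ M) φ]
  have part1 : ∑ j ∈ (Finset.Icc 1 N).filter (fun j => j ≤ M), φ j ≤ 3/β := by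
    have step1 : ∑ j ∈ (Finset.Icc 1 N).filter (fun j => j ≤ M), φ j
        ≤ ∑ j ∈ (Finset.Icc 1 N).filter (fun j => j ≤ M), 3*(j:ℝ)^(β-1)*A^(-β) :=
      Finset.sum_le_sum fun j _ => min_le_right _ _
    have step2 : ∑ j ∈ (Finset.Icc 1 N).filter (fun j => j ≤ M), 3*(j:ℝ)^(β-1)*A^(-β)
        ≤ ∑ j ∈ Finset.Icc 1 M, 3*(j:ℝ)^(β-1)*A^(-β) := by
      apply Finset.sum_le_sum_of_subset_of_nonneg
      · intro j hj
        simp only [Finset.mem_filter, Finset.mem_Icc] at hj ⊢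
        omega
      · intro j _ _
        have h1 : (0:ℝ) ≤ (j:ℝ)^(β-1) := Real.rpow_nonneg (Nat.cast_nonneg j) _
        have h2 : (0:ℝ) ≤ A^(-β) := Real.rpow_nonneg hA.le _
        positivity
    have step3 : ∑ j ∈ Finset.Icc 1 M, 3*(j:ℝ)^(β-1)*A^(-β)
        = (3*A^(-β)) * ∑ j ∈ Finset.Icc 1 M, (j:ℝ)^(β-1) := by
      rw [Finset.mul_sum]
      exact Finset.sum_congr rfl fun j _ => by ring
    have hAn : (0:ℝ) ≤ A^(-β) := Real.rpow_nonneg hA.le _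
    have step4 : (3*A^(-β)) * ∑ j ∈ Finset.Icc 1 M, (j:ℝ)^(β-1)
        ≤ (3*A^(-β)) * ((M:ℝ)^β/β) := by
      apply mul_le_mul_of_nonneg_left (sum_rpow_le hβ0 hβ1 M) (by positivity)
    have step5 : (3*A^(-β)) * ((M:ℝ)^β/β) ≤ 3/β := by
      have hMA : (M:ℝ) ≤ A := Nat.floor_le hA.le
      have h1 : (M:ℝ)^β ≤ A^β := Real.rpow_le_rpow (Nat.cast_nonneg M) hMA hβ0.le
      have h2 : A^(-β) * A^β = 1 := by
        rw [← Real.rpow_add hA]; simp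
      have h3 : (3*A^(-β)) * ((M:ℝ)^β/β) = 3/β * (A^(-β) * (M:ℝ)^β) := by ring
      have h4 : A^(-β) * (M:ℝ)^β ≤ 1 := by
        calc A^(-β) * (M:ℝ)^β ≤ A^(-β) * A^β := by
              apply mul_le_mul_of_nonneg_left h1 hAn
          _ = 1 := h2
      rw [h3]
      calc 3/β * (A^(-β) * (M:ℝ)^β) ≤ 3/β * 1 := by
            apply mul_le_mul_of_nonneg_left h4 (by positivity)
        _ = 3/β := by ring
    linarith
  have part2 : ∑ j ∈ (Finset.Icc 1 N).filter (fun j => ¬ j ≤ M), φ j ≤ 2 := by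
    have step1 : ∑ j ∈ (Finset.Icc 1 N).filter (fun j => ¬ j ≤ M), φ j
        ≤ ∑ j ∈ (Finset.Icc 1 N).filter (fun j => ¬ j ≤ M), A/(j:ℝ)^2 :=
      Finset.sum_le_sum fun j _ => min_le_left _ _
    have step2 : ∑ j ∈ (Finset.Icc 1 N).filter (fun j => ¬ j ≤ M), A/(j:ℝ)^2
        ≤ ∑ j ∈ Finset.Icc (M+1) N, A/(j:ℝ)^2 := by
      apply Finset.sum_le_sum_of_subset_of_nonneg
      · intro j hj
        simp only [Finset.mem_filter, Finset.mem_Icc] at hj ⊢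
        omega
      · intro j _ _; positivity
    have step3 : ∑ j ∈ Finset.Icc (M+1) N, A/(j:ℝ)^2
        = A * ∑ j ∈ Finset.Icc (M+1) N, (1:ℝ)/(j:ℝ)^2 := by
      rw [Finset.mul_sum]
      exact Finset.sum_congr rfl fun j _ => by ring
    have step4 : A * ∑ j ∈ Finset.Icc (M+1) N, (1:ℝ)/(j:ℝ)^2 ≤ A * (2/((M:ℝ)+1)) := by
      apply mul_le_mul_of_nonneg_left _ hA.le
      have := sum_inv_sq_le (M+1) (by omega) N
      push_cast at this
      exact this
    have step5 : A * (2/((M:ℝ)+1)) ≤ 2 := by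
      have hAM : A < (M:ℝ) + 1 := by
        have := Nat.lt_floor_add_one A
        push_cast at this
        exact this
      rw [mul_div_assoc'] at *
      rw [div_le_iff₀ (by positivity)]
      nlinarith
    linarith
  linarith

lemma Esq_spec {η : ℝ} (hη : 3 ≤ η) :
    1 ≤ Esq η ∧ (2*((Esq η : ℕ):ℝ)+1)*((Esq η : ℕ):ℝ) ≤ η := by
  have hne : {E : ℕ | 1 ≤ E ∧ ((2 * (E : ℝ) + 1) * (E : ℝ)) ≤ η}.Nonempty := by
    refine ⟨1, le_refl 1, ?_⟩
    push_cast; linarith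
  have hbdd : BddAbove {E : ℕ | 1 ≤ E ∧ ((2 * (E : ℝ) + 1) * (E : ℝ)) ≤ η} := by
    refine ⟨⌊η⌋₊, fun E hE => ?_⟩
    have hE1 : (1:ℝ) ≤ (E:ℝ) := by exact_mod_cast hE.1
    have hE2 := hE.2
    apply Nat.le_floor
    nlinarith
  exact Nat.sSup_mem hne hbdd

lemma gm_bounds {ν β η : ℝ} (hν0 : 0 < ν) (hβ0 : 0 < β) (hβ1 : β ≤ 1) (hη0 : 0 < η)
    {m : ℕ} (hm : 1 ≤ m) {τ : ℝ} (hτ : -(Dminus m η) ≤ τ) :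
    1 ≤ gm ν β m η τ ∧
    gm ν β m η τ ≤ Real.exp (Real.pi * min ((ν ^ ((1:ℝ)/3) * η) / (m:ℝ)^2)
      (3 * (m:ℝ)^(β-1) * (ν ^ ((1:ℝ)/3) * η)^(-β))) := by
  have hm0 : (0:ℝ) < (m:ℝ) := by exact_mod_cast Nat.lt_of_lt_of_le Nat.zero_lt_one hm
  have hm1 : (1:ℝ) ≤ (m:ℝ) := by exact_mod_cast hm
  have hA0 : (0:ℝ) < ν ^ ((1:ℝ)/3) * η := mul_pos (Real.rpow_pos_of_pos hν0 _) hη0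
  set A : ℝ := ν ^ ((1:ℝ)/3) * η with hAdef
  have htc : 0 < tcrit m η := by
    rw [tcrit]; positivity
  set x : ℝ := ν ^ ((1:ℝ)/3) * tcrit m η with hxdef
  have hx0 : 0 < x := mul_pos (Real.rpow_pos_of_pos hν0 _) htc
  have hjap1 : 1 ≤ jap x := by
    have h := Real.sqrt_le_sqrt (by nlinarith [sq_nonneg x] : (1:ℝ) ≤ 1 + x^2)
    rw [Real.sqrt_one] at h
    exact h
  have hjapx : x ≤ jap x := by
    rw [jap]
    calc x = Real.sqrt (x^2) := (Real.sqrt_sq hx0.le).symm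
      _ ≤ Real.sqrt (1 + x^2) := Real.sqrt_le_sqrt (by linarith)
  have hjap0 : 0 < jap x := lt_of_lt_of_le one_pos hjap1
  set K : ℝ := (jap x) ^ (-(1+β)) * (A / (m:ℝ)^2) with hKdef
  have hK0 : 0 ≤ K := by
    apply mul_nonneg (Real.rpow_nonneg hjap0.le _) (by positivity)
  have hD0 : 0 ≤ Dminus m η := by
    rw [Dminus]; positivity
  have hsum0 : 0 ≤ Real.arctan τ + Real.arctan (Dminus m η) := by
    have h1 : Real.arctan (-(Dminus m η)) ≤ Real.arctan τ :=
      Real.arctan_strictMono.monotone hτ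
    rw [Real.arctan_neg] at h1
    linarith
  have hsumπ : Real.arctan τ + Real.arctan (Dminus m η) ≤ Real.pi := by
    have h1 := Real.arctan_lt_pi_div_two τ
    have h2 := Real.arctan_lt_pi_div_two (Dminus m η)
    linarith
  have hgm : gm ν β m η τ = Real.exp (K * (Real.arctan τ + Real.arctan (Dminus m η))) := rfl
  constructor
  · rw [hgm]
    exact Real.one_le_exp (mul_nonneg hK0 hsum0)
  · rw [hgm]
    apply Real.exp_le_exp.mpr
    have hKmin : K ≤ min (A / (m:ℝ)^2) (3 * (m:ℝ)^(β-1) * A^(-β)) := by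
      apply le_min
      · calc K ≤ 1 * (A / (m:ℝ)^2) := by
              apply mul_le_mul_of_nonneg_right
                (Real.rpow_le_one_of_one_le_of_nonpos hjap1 (by linarith)) (by positivity)
          _ = A / (m:ℝ)^2 := one_mul _
      · have hbpos : (0:ℝ) < 2*A/(3*(m:ℝ)) := by positivity
        have hxeq : x = 2*A/(2*(m:ℝ)+1) := by
          rw [hxdef, tcrit, hAdef]; ring
        have hxl : 2*A/(3*(m:ℝ)) ≤ x := by
          rw [hxeq]
          apply div_le_div_of_nonneg_left (by positivity) (by positivity)
          linarith
        have h2' : (jap x) ^ (-(1+β)) ≤ (2*A/(3*(m:ℝ))) ^ (-(1+β)) :=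
          Real.rpow_le_rpow_of_nonpos hbpos (le_trans hxl hjapx) (by linarith)
        have hstep : K ≤ (2*A/(3*(m:ℝ))) ^ (-(1+β)) * (A / (m:ℝ)^2) :=
          mul_le_mul_of_nonneg_right h2' (by positivity)
        refine le_trans hstep ?_
        have e0 : (2*A/(3*(m:ℝ)))⁻¹ = (3/2) * ((m:ℝ)/A) := by
          field_simp
        have e1 : (2*A/(3*(m:ℝ))) ^ (-(1+β))
            = (3/2:ℝ)^(1+β) * ((m:ℝ)^(1+β) / A^(1+β)) := by
          rw [Real.rpow_neg hbpos.le, ← Real.inv_rpow hbpos.le, e0,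
            Real.mul_rpow (by norm_num) (by positivity),
            Real.div_rpow hm0.le hA0.le]
        have e2 : (m:ℝ)^(1+β) = (m:ℝ)^(β-1) * (m:ℝ)^2 := by
          rw [← Real.rpow_natCast (m:ℝ) 2, ← Real.rpow_add hm0]
          congr 1
          push_cast; ring
        have e3 : A^(-β) = A / A^(1+β) := by
          rw [eq_div_iff (ne_of_gt (Real.rpow_pos_of_pos hA0 _)), ← Real.rpow_add hA0]
          norm_num
        have hc3 : (3/2:ℝ)^(1+β) ≤ 3 := by
          have h1 : (3/2:ℝ)^(1+β) ≤ (3/2:ℝ)^(2:ℝ) :=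
            Real.rpow_le_rpow_of_exponent_le (by norm_num) (by linarith)
          have h2 : (3/2:ℝ)^(2:ℝ) = 9/4 := by
            rw [show (2:ℝ) = ((2:ℕ):ℝ) by norm_num, Real.rpow_natCast]; norm_num
          linarith
        rw [e1, e2, e3]
        have hQ : (0:ℝ) < A^(1+β) := Real.rpow_pos_of_pos hA0 _
        have hP : (0:ℝ) ≤ (m:ℝ)^(β-1) := Real.rpow_nonneg hm0.le _
        have lhs_eq : (3/2:ℝ)^(1+β) * ((m:ℝ)^(β-1)*(m:ℝ)^2 / A^(1+β)) * (A/(m:ℝ)^2)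
            = (3/2:ℝ)^(1+β) * ((m:ℝ)^(β-1) * A / A^(1+β)) := by
          field_simp
        have rhs_eq : 3 * (m:ℝ)^(β-1) * (A / A^(1+β))
            = 3 * ((m:ℝ)^(β-1) * A / A^(1+β)) := by
          ring
        rw [lhs_eq, rhs_eq]
        apply mul_le_mul_of_nonneg_right hc3 (by positivity)
    calc K * (Real.arctan τ + Real.arctan (Dminus m η)) ≤ K * Real.pi :=
          mul_le_mul_of_nonneg_left hsumπ hK0
      _ ≤ min (A / (m:ℝ)^2) (3 * (m:ℝ)^(β-1) * A^(-β)) * Real.pi :=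
          mul_le_mul_of_nonneg_right hKmin Real.pi_pos.le
      _ = Real.pi * min (A / (m:ℝ)^2) (3 * (m:ℝ)^(β-1) * A^(-β)) := mul_comm _ _

end Helpers

/-- total growth bound for the multiplier `w`: for every `β ∈ (0,1/2]` there
is a constant `C ≥ 1`, independent of `ν`, `η` and `t`, such that for all `ν ∈ (0,1]`,
every function `w` built by the recursive definition (equal to `1` for `t ≤ t(η)`,
multiplied by `g_m(t − η/m, η)` across each resonant interval `I_{m,η}`, and constant for
`t ≥ 2η`), all `η ≥ 3` and all `t ≥ 0`, one has `1 ≤ w(t,η) ≤ C`. -/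
theorem stmt3 (β : ℝ) (hβ0 : 0 < β) (hβ1 : β ≤ 1/2) :
    ∃ C : ℝ, 1 ≤ C ∧
      ∀ ν : ℝ, 0 < ν → ν ≤ 1 →
      ∀ w : ℝ → ℝ → ℝ,
        (∀ η : ℝ, 3 ≤ η → ∀ t : ℝ, 0 ≤ t → t ≤ tcrit (Esq η) η → w t η = 1) →
        (∀ η : ℝ, 3 ≤ η → ∀ m : ℕ, 1 ≤ m → m ≤ Esq η →
          ∀ t : ℝ, tcrit m η ≤ t → t ≤ 2 * η / (2 * (m : ℝ) - 1) →
            w t η = w (tcrit m η) η * gm ν β m η (t - η / (m : ℝ))) →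
        (∀ η : ℝ, 3 ≤ η → ∀ t : ℝ, 2 * η ≤ t → w t η = w (2 * η) η) →
        ∀ η : ℝ, 3 ≤ η → ∀ t : ℝ, 0 ≤ t → 1 ≤ w t η ∧ w t η ≤ C := by
  have hβ1' : β ≤ 1 := by linarith
  refine ⟨Real.exp (Real.pi * (3/β + 2)), Real.one_le_exp (by positivity), ?_⟩
  intro ν hν0 hν1 w h1 h2 h3 η hη t ht
  have hη0 : (0:ℝ) < η := by linarith
  obtain ⟨hE1, hE2⟩ := Esq_spec hη
  set E := Esq η with hEdef
  have hA0 : (0:ℝ) < ν ^ ((1:ℝ)/3) * η := mul_pos (Real.rpow_pos_of_pos hν0 _) hη0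
  set φ : ℕ → ℝ := fun j => min ((ν ^ ((1:ℝ)/3) * η)/(j:ℝ)^2)
      (3*(j:ℝ)^(β-1)*(ν ^ ((1:ℝ)/3) * η)^(-β)) with hφdef
  have hφ0 : ∀ j, 0 ≤ φ j := by
    intro j
    refine le_min (by positivity) ?_
    have u1 := Real.rpow_nonneg (Nat.cast_nonneg j) (β-1)
    have u2 := Real.rpow_nonneg hA0.le (-β)
    positivity
  have hSsum : ∑ j ∈ Finset.Icc 1 E, φ j ≤ 3/β + 2 := phi_sum_le hβ0 hβ1' hA0 E
  have hCsum : ∀ m : ℕ, 1 ≤ m →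
      Real.exp (Real.pi * ∑ j ∈ Finset.Icc m E, φ j) ≤ Real.exp (Real.pi * (3/β+2)) := by
    intro m hm
    apply Real.exp_le_exp.mpr
    apply mul_le_mul_of_nonneg_left _ Real.pi_pos.le
    calc ∑ j ∈ Finset.Icc m E, φ j ≤ ∑ j ∈ Finset.Icc 1 E, φ j :=
          Finset.sum_le_sum_of_subset_of_nonneg
            (Finset.Icc_subset_Icc_left hm) (fun j _ _ => hφ0 j)
      _ ≤ 3/β + 2 := hSsum
  have hsum_ins : ∀ m : ℕ, m ≤ E → φ m + ∑ j ∈ Finset.Icc (m+1) E, φ j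
      = ∑ j ∈ Finset.Icc m E, φ j := by
    intro m hmE
    have hnotmem : m ∉ Finset.Icc (m+1) E := by simp
    have hins : insert m (Finset.Icc (m+1) E) = Finset.Icc m E := by
      ext j; simp only [Finset.mem_insert, Finset.mem_Icc]; omega
    rw [← hins, Finset.sum_insert hnotmem]
  -- bounds on the value of gm at relevant points, phrased with φ
  have gmb : ∀ m : ℕ, 1 ≤ m → ∀ τ : ℝ, -(Dminus m η) ≤ τ →
      1 ≤ gm ν β m η τ ∧ gm ν β m η τ ≤ Real.exp (Real.pi * φ m) := by
    intro m hm τ hτ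
    have := gm_bounds (β := β) hν0 hβ0 hβ1' hη0 hm hτ
    simpa [hφdef] using this
  -- downward induction
  have key : ∀ k m : ℕ, m + k = E → 1 ≤ m →
      1 ≤ w (tcrit m η) η ∧
      w (tcrit m η) η ≤ Real.exp (Real.pi * ∑ j ∈ Finset.Icc (m+1) E, φ j) := by
    intro k
    induction k with
    | zero =>
      intro m hmE hm
      have hmE' : m = E := by omega
      rw [hmE']
      have htc0 : (0:ℝ) ≤ tcrit E η := by rw [tcrit]; positivity
      rw [h1 η hη _ htc0 (le_refl _)]
      rw [Finset.Icc_eq_empty (by omega)]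
      simp
    | succ k ih =>
      intro m hmE hm
      obtain ⟨ih1, ih2⟩ := ih (m+1) (by omega) (by omega)
      have hmcast : ((m+1:ℕ):ℝ) = (m:ℝ) + 1 := by push_cast; ring
      have hm1r : tcrit (m+1) η ≤ tcrit m η := by
        rw [tcrit, tcrit, hmcast]
        apply div_le_div_of_nonneg_left (by linarith) (by positivity)
        push_cast; linarith
      have hm1r2 : tcrit m η ≤ 2*η/(2*((m+1:ℕ):ℝ)-1) := by
        rw [tcrit, hmcast]
        apply le_of_eq
        congr 1
        ring
      have hrec := h2 η hη (m+1) (by omega) (by omega) (tcrit m η) hm1r hm1r2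
      have hτ : -(Dminus (m+1) η) ≤ tcrit m η - η/((m+1:ℕ):ℝ) := by
        have hD : 0 ≤ Dminus (m+1) η := by
          rw [Dminus]; positivity
        have hτ0 : 0 ≤ tcrit m η - η/((m+1:ℕ):ℝ) := by
          rw [tcrit, hmcast, sub_nonneg, div_le_div_iff₀
            (show (0:ℝ) < (m:ℝ)+1 by positivity) (show (0:ℝ) < 2*(m:ℝ)+1 by positivity)]
          nlinarith [(Nat.cast_nonneg m : (0:ℝ) ≤ (m:ℝ)), hη0]
        linarith
      obtain ⟨g1, g2⟩ := gmb (m+1) (by omega) _ hτ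
      have hgm0 : (0:ℝ) ≤ gm ν β (m+1) η (tcrit m η - η/((m+1:ℕ):ℝ)) := by linarith
      constructor
      · rw [hrec]
        calc (1:ℝ) = 1 * 1 := (one_mul 1).symm
          _ ≤ w (tcrit (m+1) η) η * gm ν β (m+1) η (tcrit m η - η/((m+1:ℕ):ℝ)) :=
            mul_le_mul ih1 g1 zero_le_one (le_trans zero_le_one ih1)
      · rw [hrec]
        calc w (tcrit (m+1) η) η * gm ν β (m+1) η (tcrit m η - η/((m+1:ℕ):ℝ))
            ≤ Real.exp (Real.pi * ∑ j ∈ Finset.Icc (m+1+1) E, φ j) * Real.exp (Real.pi * φ (m+1)) :=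
              mul_le_mul ih2 g2 hgm0 (Real.exp_nonneg _)
          _ = Real.exp (Real.pi * (φ (m+1) + ∑ j ∈ Finset.Icc (m+1+1) E, φ j)) := by
              rw [← Real.exp_add]; ring_nf
          _ = Real.exp (Real.pi * ∑ j ∈ Finset.Icc (m+1) E, φ j) := by
              rw [hsum_ins (m+1) (by omega)]
  -- final case analysis
  by_cases hcase : t ≤ tcrit E η
  · rw [h1 η hη t ht hcase]
    exact ⟨le_refl 1, Real.one_le_exp (by positivity)⟩
  · push_neg at hcase
    have htcE : (0:ℝ) < tcrit E η := by rw [tcrit]; positivity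
    have hwu : w t η = w (min t (2*η)) η := by
      rcases le_total t (2*η) with h | h
      · rw [min_eq_left h]
      · rw [min_eq_right h, h3 η hη t h]
    obtain ⟨u, hudef⟩ : ∃ u : ℝ, u = min t (2*η) := ⟨_, rfl⟩
    rw [← hudef] at hwu
    have hu2 : u ≤ 2*η := by rw [hudef]; exact min_le_right _ _
    have huE : tcrit E η < u := by
      rw [hudef]
      apply lt_min hcase
      rw [tcrit]
      apply div_lt_self (by linarith)
      have : (1:ℝ) ≤ (E:ℝ) := by exact_mod_cast hE1
      linarith
    have hu0 : (0:ℝ) < u := lt_trans htcE huE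
    obtain ⟨s, hsdef⟩ : ∃ s : ℝ, s = (2*η/u - 1)/2 := ⟨_, rfl⟩
    have hru : 2*η/u = 2*s+1 := by rw [hsdef]; ring
    have hs0 : 0 ≤ s := by
      have h1 : (1:ℝ) ≤ 2*η/u := (one_le_div hu0).mpr (by linarith)
      rw [hru] at h1; linarith
    obtain ⟨m, hmdef⟩ : ∃ m : ℕ, m = ⌊s⌋₊ + 1 := ⟨_, rfl⟩
    have hm1 : 1 ≤ m := by omega
    have hmcast : (m:ℝ) = (⌊s⌋₊:ℝ) + 1 := by rw [hmdef]; push_cast; ring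
    have hsm : s < (m:ℝ) := by
      rw [hmcast]; exact Nat.lt_floor_add_one s
    have hms : (m:ℝ) - 1 ≤ s := by
      rw [hmcast]
      have := Nat.floor_le hs0
      linarith
    have hmE : m ≤ E := by
      have hsE : s < (E:ℝ) := by
        have hlt : tcrit E η < u := huE
        rw [tcrit] at hlt
        have hd : (0:ℝ) < 2*(E:ℝ)+1 := by positivity
        rw [div_lt_iff₀ hd] at hlt
        have h1 : 2*η/u < 2*(E:ℝ)+1 := by
          rw [div_lt_iff₀ hu0]
          linarith [mul_comm u (2*(E:ℝ)+1)]
        rw [hru] at h1; linarith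
      have := (Nat.floor_lt hs0).mpr hsE
      omega
    have hleft : tcrit m η ≤ u := by
      rw [tcrit, div_le_iff₀ (by positivity)]
      have h1 : 2*η/u ≤ 2*(m:ℝ)+1 := by rw [hru]; linarith
      rw [div_le_iff₀ hu0] at h1
      linarith [mul_comm u (2*(m:ℝ)+1)]
    have hright : u ≤ 2*η/(2*(m:ℝ)-1) := by
      have hm1' : (1:ℝ) ≤ (m:ℝ) := by exact_mod_cast hm1
      have hden : (0:ℝ) < 2*(m:ℝ)-1 := by linarith
      rw [le_div_iff₀ hden]
      have h1 : 2*(m:ℝ)-1 ≤ 2*η/u := by rw [hru]; linarith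
      rw [le_div_iff₀ hu0] at h1
      linarith [mul_comm u (2*(m:ℝ)-1)]
    have hrec := h2 η hη m hm1 hmE u hleft hright
    have hτ : -(Dminus m η) ≤ u - η/(m:ℝ) := by
      have hm0 : (0:ℝ) < (m:ℝ) := by exact_mod_cast Nat.lt_of_lt_of_le Nat.zero_lt_one hm1
      have heq : tcrit m η - η/(m:ℝ) = -(Dminus m η) := by
        rw [tcrit, Dminus]
        field_simp
        ring
      have : tcrit m η - η/(m:ℝ) ≤ u - η/(m:ℝ) := by linarith
      linarith [heq ▸ this]
    obtain ⟨g1, g2⟩ := gmb m hm1 _ hτ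
    obtain ⟨k1, k2⟩ := key (E - m) m (by omega) hm1
    have hgm0 : (0:ℝ) ≤ gm ν β m η (u - η/(m:ℝ)) := by linarith
    have hw1 : 1 ≤ w u η := by
      rw [hrec]
      calc (1:ℝ) = 1 * 1 := (one_mul 1).symm
        _ ≤ w (tcrit m η) η * gm ν β m η (u - η/(m:ℝ)) :=
          mul_le_mul k1 g1 zero_le_one (le_trans zero_le_one k1)
    have hw2 : w u η ≤ Real.exp (Real.pi * ∑ j ∈ Finset.Icc m E, φ j) := by
      rw [hrec]
      calc w (tcrit m η) η * gm ν β m η (u - η/(m:ℝ))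
          ≤ Real.exp (Real.pi * ∑ j ∈ Finset.Icc (m+1) E, φ j) * Real.exp (Real.pi * φ m) :=
            mul_le_mul k2 g2 hgm0 (Real.exp_nonneg _)
        _ = Real.exp (Real.pi * (φ m + ∑ j ∈ Finset.Icc (m+1) E, φ j)) := by
            rw [← Real.exp_add]; ring_nf
        _ = Real.exp (Real.pi * ∑ j ∈ Finset.Icc m E, φ j) := by
            rw [hsum_ins m hmE]
    rw [hwu]
    exact ⟨hw1, le_trans hw2 (hCsum m hm1)⟩
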